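/- arXiv:1411.6317 — 2 statements merged into one kernel-verified Lean document; each statement's English description precedes it below -/
import Mathlib

section
/- Suppose p is a univariate polynomial such that |e^x − p(x)| ≤ δ·e^x for all x ∈ [−τ/2, τ/2], with δ ∈ (0,1]. Then for every symmetric matrix F with operator norm ‖F‖ ≤ τ, the trace-norm distance between the normalized states e^F/Tr(e^F) and p(F/2)^2/Tr(p(F/2)^2) is at most 6δ. -/
/-- The (ℓ² → ℓ²) operator norm of a real square matrix. -/
noncomputable def opNorm {r : ℕ} (A : Matrix (Fin r) (Fin r) ℝ) : ℝ :=
  ‖Matrix.toEuclideanCLM (𝕜 := ℝ) A‖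

/-- The trace (nuclear) norm of a real square matrix: `Tr √(Aᵀ A)`. -/
noncomputable def traceNorm {r : ℕ} (A : Matrix (Fin r) (Fin r) ℝ) : ℝ :=
  ((Matrix.posSemidef_conjTranspose_mul_self A).1.eigenvectorUnitary.1 *
    Matrix.diagonal (((↑) : ℝ → ℝ) ∘ (√·) ∘ (Matrix.posSemidef_conjTranspose_mul_self A).1.eigenvalues) *
    (star (Matrix.posSemidef_conjTranspose_mul_self A).1.eigenvectorUnitary :
      Matrix (Fin r) (Fin r) ℝ)).trace

open Matrix

private lemma conj_mul_conj {n : ℕ} (U : Matrix.unitaryGroup (Fin n) ℝ)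
    (X Y : Matrix (Fin n) (Fin n) ℝ) :
    ((U : Matrix (Fin n) (Fin n) ℝ) * X * star (U : Matrix (Fin n) (Fin n) ℝ)) *
      ((U : Matrix (Fin n) (Fin n) ℝ) * Y * star (U : Matrix (Fin n) (Fin n) ℝ))
      = (U : Matrix (Fin n) (Fin n) ℝ) * (X * Y) * star (U : Matrix (Fin n) (Fin n) ℝ) := by
  have h : star (U : Matrix (Fin n) (Fin n) ℝ) * (U : Matrix (Fin n) (Fin n) ℝ) = 1 :=
    Unitary.coe_star_mul_self U
  calc (U : Matrix (Fin n) (Fin n) ℝ) * X * star (U : Matrix (Fin n) (Fin n) ℝ) *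
        ((U : Matrix (Fin n) (Fin n) ℝ) * Y * star (U : Matrix (Fin n) (Fin n) ℝ))
      = (U : Matrix (Fin n) (Fin n) ℝ) * X *
          (star (U : Matrix (Fin n) (Fin n) ℝ) * (U : Matrix (Fin n) (Fin n) ℝ)) *
          (Y * star (U : Matrix (Fin n) (Fin n) ℝ)) := by noncomm_ring
    _ = _ := by rw [h, mul_one]; noncomm_ring

private noncomputable def conjAlgHom {n : ℕ} (U : Matrix.unitaryGroup (Fin n) ℝ) :
    Matrix (Fin n) (Fin n) ℝ →ₐ[ℝ] Matrix (Fin n) (Fin n) ℝ where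
  toFun X := (U : Matrix (Fin n) (Fin n) ℝ) * X * star (U : Matrix (Fin n) (Fin n) ℝ)
  map_one' := by
    show (U : Matrix (Fin n) (Fin n) ℝ) * 1 * star (U : Matrix (Fin n) (Fin n) ℝ) = 1
    rw [mul_one]; exact Unitary.coe_mul_star_self U
  map_mul' X Y := (conj_mul_conj U X Y).symm
  map_zero' := by simp
  map_add' X Y := by noncomm_ring
  commutes' r := by
    show (U : Matrix (Fin n) (Fin n) ℝ) * algebraMap ℝ _ r * star (U : Matrix (Fin n) (Fin n) ℝ)
      = algebraMap ℝ _ r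
    rw [Algebra.algebraMap_eq_smul_one, mul_smul_comm, mul_one, smul_mul_assoc,
      Matrix.mem_unitaryGroup_iff.mp U.2]

private lemma trace_conj_unitary {n : ℕ} (U : Matrix.unitaryGroup (Fin n) ℝ)
    (D : Matrix (Fin n) (Fin n) ℝ) :
    ((U : Matrix (Fin n) (Fin n) ℝ) * D * star (U : Matrix (Fin n) (Fin n) ℝ)).trace = D.trace := by
  rw [Matrix.trace_mul_cycle, Unitary.coe_star_mul_self, one_mul]

open scoped MatrixOrder in
private lemma traceNorm_conj_diagonal {n : ℕ} (U : Matrix.unitaryGroup (Fin n) ℝ)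
    (d : Fin n → ℝ) :
    traceNorm ((U : Matrix (Fin n) (Fin n) ℝ) * Matrix.diagonal d *
      star (U : Matrix (Fin n) (Fin n) ℝ)) = ∑ i, |d i| := by
  set Uc : Matrix (Fin n) (Fin n) ℝ := (U : Matrix (Fin n) (Fin n) ℝ) with hUc
  set A := Uc * Matrix.diagonal d * star Uc with hA
  have hBpsd : (Uc * Matrix.diagonal (fun i => |d i|) * star Uc).PosSemidef := by
    rw [Matrix.star_eq_conjTranspose]
    exact (Matrix.posSemidef_diagonal_iff.mpr fun i => abs_nonneg _).mul_mul_conjTranspose_same Uc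
  have hAH : Aᴴ = A := by
    rw [hA, Matrix.star_eq_conjTranspose]
    exact (Matrix.isHermitian_mul_mul_conjTranspose Uc (Matrix.isHermitian_diagonal d)).eq
  have hsq : (Uc * Matrix.diagonal (fun i => |d i|) * star Uc) ^ 2 = Aᴴ * A := by
    rw [pow_two, conj_mul_conj, hAH, hA, conj_mul_conj, Matrix.diagonal_mul_diagonal,
      Matrix.diagonal_mul_diagonal]
    have h4 : (fun i => |d i| * |d i|) = fun i => d i * d i :=
      funext fun i => abs_mul_abs_self (d i)
    rw [h4]
  have hpsd2 : (0 : Matrix (Fin n) (Fin n) ℝ) ≤ Aᴴ * A :=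
    Matrix.nonneg_iff_posSemidef.mpr (Matrix.posSemidef_conjTranspose_mul_self A)
  have heq : cfc Real.sqrt (Aᴴ * A) = Uc * Matrix.diagonal (fun i => |d i|) * star Uc := by
    rw [← cfcₙ_eq_cfc, ← CFC.sqrt_eq_real_sqrt _ hpsd2, ← hsq,
      CFC.sqrt_sq _ (Matrix.nonneg_iff_posSemidef.mpr hBpsd)]
  have h2 := (Matrix.posSemidef_conjTranspose_mul_self A).1.cfc_eq Real.sqrt
  calc traceNorm A = ((Matrix.posSemidef_conjTranspose_mul_self A).1.cfc Real.sqrt).trace := rfl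
    _ = _ := by rw [← h2, heq, trace_conj_unitary, Matrix.trace_diagonal]

private lemma key_sum {n : ℕ} (hn : 0 < n) {δ : ℝ} (hδ0 : 0 < δ) (a b : Fin n → ℝ)
    (ha : ∀ i, 0 < a i) (hb : ∀ i, 0 ≤ b i)
    (hab : ∀ i, |a i - b i| ≤ 3 * δ * a i) :
    ∑ i, |(∑ j, a j)⁻¹ * a i - (∑ j, b j)⁻¹ * b i| ≤ 6 * δ := by
  have hne : Nonempty (Fin n) := Fin.pos_iff_nonempty.mp hn
  set A := ∑ j, a j with hAdef
  set B := ∑ j, b j with hBdef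
  have hA : 0 < A := Finset.sum_pos (fun i _ => ha i) Finset.univ_nonempty
  have hBnn : 0 ≤ B := Finset.sum_nonneg fun i _ => hb i
  have hsum_ab : ∑ i, |a i - b i| ≤ 3 * δ * A := by
    calc ∑ i, |a i - b i| ≤ ∑ i, 3 * δ * a i := Finset.sum_le_sum fun i _ => hab i
      _ = 3 * δ * A := by rw [← Finset.mul_sum]
  have hBA : |B - A| ≤ 3 * δ * A := by
    have h1 : |B - A| ≤ ∑ i, |b i - a i| := by
      rw [hBdef, hAdef, ← Finset.sum_sub_distrib]
      exact Finset.abs_sum_le_sum_abs _ _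
    have h2 : ∑ i, |b i - a i| ≤ 3 * δ * A := by
      simpa [abs_sub_comm] using hsum_ab
    linarith
  rcases eq_or_lt_of_le hBnn with hB0 | hB
  · have hb0 : ∀ i, b i = 0 := by
      intro i
      exact (Finset.sum_eq_zero_iff_of_nonneg (fun i _ => hb i)).mp hB0.symm i (Finset.mem_univ i)
    obtain ⟨i0⟩ := hne
    have h1 : (1 : ℝ) ≤ 3 * δ := by
      have h := hab i0
      rw [hb0 i0, sub_zero, abs_of_pos (ha i0)] at h
      nlinarith [ha i0]
    have h2 : ∑ i, |A⁻¹ * a i - B⁻¹ * b i| = 1 := by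
      have h3 : ∀ i ∈ Finset.univ, |A⁻¹ * a i - B⁻¹ * b i| = A⁻¹ * a i := fun i _ => by
        rw [hb0 i, mul_zero, sub_zero, abs_of_pos (mul_pos (inv_pos.mpr hA) (ha i))]
      rw [Finset.sum_congr rfl h3, ← Finset.mul_sum, ← hAdef, inv_mul_cancel₀ hA.ne']
    rw [h2]; linarith
  · have key : ∀ i, |A⁻¹ * a i - B⁻¹ * b i| ≤ A⁻¹ * |a i - b i| + b i * (|B - A| / (A * B)) := by
      intro i
      have h1 : A⁻¹ * a i - B⁻¹ * b i = A⁻¹ * (a i - b i) + b i * ((B - A) / (A * B)) := by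
        field_simp
        ring
      rw [h1]
      refine (abs_add_le _ _).trans ?_
      rw [abs_mul, abs_mul, abs_of_pos (inv_pos.mpr hA), abs_of_nonneg (hb i), abs_div,
        abs_of_pos (mul_pos hA hB)]
    calc ∑ i, |A⁻¹ * a i - B⁻¹ * b i|
        ≤ ∑ i, (A⁻¹ * |a i - b i| + b i * (|B - A| / (A * B))) :=
          Finset.sum_le_sum fun i _ => key i
      _ = A⁻¹ * (∑ i, |a i - b i|) + B * (|B - A| / (A * B)) := by
          rw [Finset.sum_add_distrib, ← Finset.mul_sum, ← Finset.sum_mul, ← hBdef]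
      _ ≤ A⁻¹ * (3 * δ * A) + B * ((3 * δ * A) / (A * B)) := by
          gcongr
      _ = 6 * δ := by
          field_simp
          ring

/-- Suppose the univariate polynomial `p` satisfies
`|e^x − p(x)| ≤ δ·e^x` on `[−τ/2, τ/2]`, with `δ ∈ (0,1]`.  Then for every real symmetric
matrix `F` with `‖F‖ ≤ τ`, the trace-norm distance between the normalized states
`e^F/Tr(e^F)` and `p(F/2)²/Tr(p(F/2)²)` is at most `6δ`. -/
theorem stmt7 (n : ℕ) (hn : 0 < n) (δ τ : ℝ) (hδ0 : 0 < δ) (hδ1 : δ ≤ 1)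
    (p : Polynomial ℝ)
    (hp : ∀ x ∈ Set.Icc (-(τ / 2)) (τ / 2), |Real.exp x - p.eval x| ≤ δ * Real.exp x)
    (F : Matrix (Fin n) (Fin n) ℝ) (hF : F.IsHermitian) (hFn : opNorm F ≤ τ) :
    traceNorm
      ((NormedSpace.exp F).trace⁻¹ • NormedSpace.exp F -
        ((Polynomial.aeval ((2 : ℝ)⁻¹ • F) p) ^ 2).trace⁻¹ •
          (Polynomial.aeval ((2 : ℝ)⁻¹ • F) p) ^ 2) ≤ 6 * δ := by
  classical
  set U := hF.eigenvectorUnitary with hU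
  set Uc : Matrix (Fin n) (Fin n) ℝ := (U : Matrix (Fin n) (Fin n) ℝ) with hUcdef
  set d : Fin n → ℝ := hF.eigenvalues with hd
  -- spectral theorem
  have hspec : F = Uc * Matrix.diagonal d * star Uc := by
    have h := hF.spectral_theorem
    rwa [RCLike.ofReal_real_eq_id, Function.id_comp] at h
  -- eigenvalue bound
  have heig : ∀ i, |d i| ≤ τ := by
    intro i
    have hv1 : ‖hF.eigenvectorBasis i‖ = 1 := hF.eigenvectorBasis.orthonormal.1 i
    have hmul : Matrix.toEuclideanCLM (𝕜 := ℝ) F (hF.eigenvectorBasis i)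
        = d i • hF.eigenvectorBasis i := by
      apply (WithLp.equiv 2 (Fin n → ℝ)).injective
      rw [WithLp.equiv_apply, WithLp.equiv_apply, Matrix.ofLp_toEuclideanCLM]
      simpa using hF.mulVec_eigenvectorBasis i
    have h2 : |d i| = ‖Matrix.toEuclideanCLM (𝕜 := ℝ) F (hF.eigenvectorBasis i)‖ := by
      rw [hmul, norm_smul, hv1, mul_one, Real.norm_eq_abs]
    calc |d i| = ‖Matrix.toEuclideanCLM (𝕜 := ℝ) F (hF.eigenvectorBasis i)‖ := h2
      _ ≤ ‖Matrix.toEuclideanCLM (𝕜 := ℝ) F‖ * ‖hF.eigenvectorBasis i‖ :=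
          (Matrix.toEuclideanCLM (𝕜 := ℝ) F).le_opNorm _
      _ = opNorm F := by rw [hv1, mul_one]; rfl
      _ ≤ τ := hFn
  -- scalar estimate per eigenvalue
  have hkey : ∀ i, |Real.exp (d i) - (p.eval (d i / 2)) ^ 2| ≤ 3 * δ * Real.exp (d i) := by
    intro i
    have habs := abs_le.mp (heig i)
    have hx : d i / 2 ∈ Set.Icc (-(τ / 2)) (τ / 2) := ⟨by linarith [habs.1], by linarith [habs.2]⟩
    have h1 := hp (d i / 2) hx
    set e := Real.exp (d i / 2) with he
    have hepos : 0 < e := Real.exp_pos _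
    set q := p.eval (d i / 2) with hq
    have hee : Real.exp (d i) = e ^ 2 := by
      rw [he, sq, ← Real.exp_add]
      congr 1
      ring
    have hqb : |q| ≤ (1 + δ) * e := by
      have h3 : |q| - |e| ≤ |q - e| := abs_sub_abs_le_abs_sub q e
      rw [abs_sub_comm] at h3
      rw [abs_of_pos hepos] at h3
      linarith
    have hfac : |e ^ 2 - q ^ 2| = |e - q| * |e + q| := by
      rw [← abs_mul]
      congr 1
      ring
    rw [hee, hfac]
    have hsum : |e + q| ≤ 3 * e := by
      calc |e + q| ≤ |e| + |q| := abs_add_le _ _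
        _ ≤ e + (1 + δ) * e := by rw [abs_of_pos hepos]; linarith
        _ ≤ 3 * e := by nlinarith
    calc |e - q| * |e + q| ≤ (δ * e) * (3 * e) :=
          mul_le_mul h1 hsum (abs_nonneg _) (by positivity)
      _ = 3 * δ * e ^ 2 := by ring
  -- matrix computations
  have hmulstar : Uc * star Uc = 1 := Matrix.mem_unitaryGroup_iff.mp U.2
  have hstarmul : star Uc * Uc = 1 := Matrix.mem_unitaryGroup_iff'.mp U.2
  set u : (Matrix (Fin n) (Fin n) ℝ)ˣ := ⟨Uc, star Uc, hmulstar, hstarmul⟩ with hu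
  have hexp : NormedSpace.exp F
      = Uc * Matrix.diagonal (fun i => Real.exp (d i)) * star Uc := by
    rw [hspec]
    have h := Matrix.exp_units_conj u (Matrix.diagonal d)
    have hcu : (↑u : Matrix (Fin n) (Fin n) ℝ) = Uc := rfl
    have hcu' : (↑u⁻¹ : Matrix (Fin n) (Fin n) ℝ) = star Uc := rfl
    rw [hcu, hcu'] at h
    rw [h, Matrix.exp_diagonal]
    have hfun : NormedSpace.exp d = fun i => Real.exp (d i) := by
      funext i
      rw [Pi.coe_exp]
      exact (congrFun Real.exp_eq_exp_ℝ (d i)).symm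
    rw [hfun]
  have hhalf : (2 : ℝ)⁻¹ • F = Uc * Matrix.diagonal (fun i => d i / 2) * star Uc := by
    have hdiag : Matrix.diagonal (fun i => d i / 2) = (2 : ℝ)⁻¹ • Matrix.diagonal d := by
      have hfun : (fun i => d i / 2) = (2 : ℝ)⁻¹ • d := by
        funext i
        simp [div_eq_inv_mul]
      rw [hfun, Matrix.diagonal_smul]
    rw [hspec, hdiag, mul_smul_comm, smul_mul_assoc]
  have haeval : Polynomial.aeval ((2 : ℝ)⁻¹ • F) p
      = Uc * Matrix.diagonal (fun i => p.eval (d i / 2)) * star Uc := by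
    rw [hhalf]
    have h1 : Uc * Matrix.diagonal (fun i => d i / 2) * star Uc
        = conjAlgHom U (Matrix.diagonal (fun i => d i / 2)) := rfl
    rw [h1, Polynomial.aeval_algHom_apply]
    have h2 : (Polynomial.aeval (Matrix.diagonal fun i => d i / 2)) p
        = Matrix.diagonal (fun i => p.eval (d i / 2)) := by
      have h3 : Matrix.diagonal (fun i => d i / 2)
          = Matrix.diagonalAlgHom ℝ (fun i : Fin n => d i / 2) := rfl
      rw [h3, Polynomial.aeval_algHom_apply]
      have h4 : Polynomial.aeval (fun i => d i / 2) p = fun i => p.eval (d i / 2) := by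
        funext i
        have h5 := Polynomial.aeval_algHom_apply (Pi.evalAlgHom ℝ (fun _ : Fin n => ℝ) i)
          (fun j => d j / 2) p
        rw [← Polynomial.coe_aeval_eq_eval]
        exact h5.symm
      rw [h4]
      rfl
    rw [h2]
    rfl
  have hsq2 : (Polynomial.aeval ((2 : ℝ)⁻¹ • F) p) ^ 2
      = Uc * Matrix.diagonal (fun i => (p.eval (d i / 2)) ^ 2) * star Uc := by
    rw [sq, haeval, conj_mul_conj, Matrix.diagonal_mul_diagonal]
    have h4 : (fun i => p.eval (d i / 2) * p.eval (d i / 2))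
        = fun i => (p.eval (d i / 2)) ^ 2 := funext fun i => (sq _).symm
    rw [h4]
  -- traces
  have htrexp : (NormedSpace.exp F).trace = ∑ i, Real.exp (d i) := by
    rw [hexp, trace_conj_unitary, Matrix.trace_diagonal]
  have htrsq : ((Polynomial.aeval ((2 : ℝ)⁻¹ • F) p) ^ 2).trace
      = ∑ i, (p.eval (d i / 2)) ^ 2 := by
    rw [hsq2, trace_conj_unitary, Matrix.trace_diagonal]
  -- the difference matrix
  have hdiffmat : (NormedSpace.exp F).trace⁻¹ • NormedSpace.exp F -
        ((Polynomial.aeval ((2 : ℝ)⁻¹ • F) p) ^ 2).trace⁻¹ •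
          (Polynomial.aeval ((2 : ℝ)⁻¹ • F) p) ^ 2
      = Uc * Matrix.diagonal (fun i =>
          (∑ j, Real.exp (d j))⁻¹ * Real.exp (d i)
            - (∑ j, (p.eval (d j / 2)) ^ 2)⁻¹ * (p.eval (d i / 2)) ^ 2) * star Uc := by
    rw [htrexp, htrsq, hexp, hsq2]
    have hdiag : Matrix.diagonal (fun i =>
          (∑ j, Real.exp (d j))⁻¹ * Real.exp (d i)
            - (∑ j, (p.eval (d j / 2)) ^ 2)⁻¹ * (p.eval (d i / 2)) ^ 2)
        = (∑ j, Real.exp (d j))⁻¹ • Matrix.diagonal (fun i => Real.exp (d i))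
          - (∑ j, (p.eval (d j / 2)) ^ 2)⁻¹ • Matrix.diagonal (fun i => (p.eval (d i / 2)) ^ 2) := by
      rw [← Matrix.diagonal_smul, ← Matrix.diagonal_smul, ← Matrix.diagonal_sub]
      rfl
    rw [hdiag, Matrix.mul_sub, Matrix.sub_mul, mul_smul_comm, smul_mul_assoc,
      mul_smul_comm, smul_mul_assoc]
  rw [hdiffmat, traceNorm_conj_diagonal]
  exact key_sum hn hδ0 (fun i => Real.exp (d i)) (fun i => (p.eval (d i / 2)) ^ 2)
    (fun i => Real.exp_pos _) (fun i => sq_nonneg _) hkey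
end

section
/- Let B : {±1}^n → ℝ^{p×p} have degree at most ℓ as a matrix-valued multilinear polynomial. For a uniformly random m-subset S of [n] and uniformly random x, the high part B_{S,high}(x) = ∑_{|α∩S| > d/2} B̂(α)χ_α(x) satisfies E_{S,x} ‖B_{S,high}(x)‖_F² ≤ (ℓm/(n−m))^{d/2} · E_x ‖B(x)‖_F². -/
/-- The real value of a Boolean cube coordinate (`{0,1}` encoding). -/
def bval (b : Bool) : ℝ := if b then 1 else 0

/-- The `±1` value of a Boolean cube coordinate. -/
def sgn (b : Bool) : ℝ := if b then -1 else 1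

/-- The Fourier character `χ_α(x) = ∏_{i∈α} x_i` on `{±1}^n`. -/
def chi {n : ℕ} (α : Finset (Fin n)) (x : Fin n → Bool) : ℝ := ∏ i ∈ α, sgn (x i)

/-- The matrix-valued Fourier coefficient `B̂(α) = E_x χ_α(x)·B(x)`. -/
noncomputable def matFourierCoeff {n p : ℕ} (B : (Fin n → Bool) → Matrix (Fin p) (Fin p) ℝ)
    (α : Finset (Fin n)) : Matrix (Fin p) (Fin p) ℝ :=
  ((2 : ℝ) ^ n)⁻¹ • ∑ x : Fin n → Bool, chi α x • B x

/-- The high part `B_{S,high}(x) = ∑_{|α∩S| > d/2} B̂(α) χ_α(x)` of `B` relative to `S`. -/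
noncomputable def highPart {n p : ℕ} (d : ℕ)
    (B : (Fin n → Bool) → Matrix (Fin p) (Fin p) ℝ) (S : Finset (Fin n))
    (x : Fin n → Bool) : Matrix (Fin p) (Fin p) ℝ :=
  ∑ α ∈ Finset.filter (fun α : Finset (Fin n) => d < 2 * (α ∩ S).card) Finset.univ,
    chi α x • matFourierCoeff B α

/-- The squared Frobenius norm `‖M‖_F² = ∑_{i,j} M_{ij}²`. -/
def frobSq {p : ℕ} (M : Matrix (Fin p) (Fin p) ℝ) : ℝ := ∑ i, ∑ j, (M i j) ^ 2

/-- Restriction `x_S ∈ {0,1}^m` of `x ∈ {0,1}^n` to an `m`-element subset `S` (in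
increasing order of coordinates). -/
noncomputable def restrict (m n : ℕ) (S : Finset (Fin n)) (x : Fin n → Bool) :
    Fin m → Bool :=
  if h : S.card = m then fun i => x ((S.orderIsoOfFin h) i) else fun _ => false

/-- Average over a uniformly random `m`-subset `S` of `[n]` and a uniform `x ∈ {0,1}^n`. -/
noncomputable def avgSx (m n : ℕ) (f : Finset (Fin n) → (Fin n → Bool) → ℝ) : ℝ :=
  (∑ S ∈ Finset.powersetCard m (Finset.univ : Finset (Fin n)),
      ∑ x : Fin n → Bool, f S x) / ((Nat.choose n m : ℝ) * 2 ^ n)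

/-- `g : {0,1}^m → ℝ` has (multilinear) degree at most `k`. -/
def HasDegLE (m k : ℕ) (g : (Fin m → Bool) → ℝ) : Prop :=
  ∃ c : Finset (Fin m) → ℝ, (∀ S : Finset (Fin m), k < S.card → c S = 0) ∧
    ∀ x, g x = ∑ S : Finset (Fin m), c S * ∏ i ∈ S, bval (x i)

/-- A degree-`d` pseudo-density on `{0,1}^m`. -/
def IsPseudoDensity (m d : ℕ) (D : (Fin m → Bool) → ℝ) : Prop :=
  (∑ x : Fin m → Bool, D x) / 2 ^ m = 1 ∧
    ∀ g : (Fin m → Bool) → ℝ, HasDegLE m (d / 2) g →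
      0 ≤ (∑ x : Fin m → Bool, D x * g x ^ 2) / 2 ^ m

lemma chi_ortho {n : ℕ} (α β : Finset (Fin n)) :
    ∑ x : Fin n → Bool, chi α x * chi β x = if α = β then (2:ℝ)^n else 0 := by
  have hchi : ∀ (γ : Finset (Fin n)) (x : Fin n → Bool),
      chi γ x = ∏ i : Fin n, (if i ∈ γ then sgn (x i) else 1) := by
    intro γ x
    rw [chi, Finset.prod_ite_mem, Finset.univ_inter]
  have h1 : ∑ x : Fin n → Bool, chi α x * chi β x
      = ∏ i : Fin n, ∑ b : Bool,
          ((if i ∈ α then sgn b else 1) * (if i ∈ β then sgn b else 1)) := by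
    rw [Finset.prod_univ_sum]
    rw [Fintype.piFinset_univ]
    apply Finset.sum_congr rfl
    intro x _
    rw [hchi, hchi, ← Finset.prod_mul_distrib]
  rw [h1]
  by_cases h : α = β
  · subst h
    rw [if_pos rfl]
    have h2 : ∀ i : Fin n,
        (∑ b : Bool, ((if i ∈ α then sgn b else 1) * (if i ∈ α then sgn b else 1))) = 2 := by
      intro i; by_cases hi : i ∈ α <;> simp [hi, sgn] <;> norm_num
    rw [Finset.prod_congr rfl (fun i _ => h2 i), Finset.prod_const]
    simp
  · rw [if_neg h]
    have hex : ∃ i : Fin n, ¬ (i ∈ α ↔ i ∈ β) := by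
      by_contra hc
      push_neg at hc
      exact h (Finset.ext fun i => hc i)
    obtain ⟨i, hi⟩ := hex
    apply Finset.prod_eq_zero (Finset.mem_univ i)
    by_cases hiα : i ∈ α <;> by_cases hiβ : i ∈ β <;>
      simp [hiα, hiβ, sgn] at hi ⊢

lemma sum_sq_chi {n : ℕ} (F : Finset (Finset (Fin n))) (a : Finset (Fin n) → ℝ) :
    ∑ x : Fin n → Bool, (∑ α ∈ F, a α * chi α x)^2 = 2^n * ∑ α ∈ F, (a α)^2 := by
  have e1 : ∀ x : Fin n → Bool, (∑ α ∈ F, a α * chi α x)^2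
      = ∑ α ∈ F, ∑ β ∈ F, (a α * a β) * (chi α x * chi β x) := by
    intro x
    rw [sq, Finset.sum_mul_sum]
    exact Finset.sum_congr rfl fun α _ => Finset.sum_congr rfl fun β _ => by ring
  simp_rw [e1]
  rw [Finset.sum_comm]
  have e2 : ∀ α ∈ F, ∑ x : Fin n → Bool, ∑ β ∈ F, (a α * a β) * (chi α x * chi β x)
      = (a α)^2 * 2^n := by
    intro α hα
    rw [Finset.sum_comm]
    have e3 : ∀ β ∈ F, ∑ x : Fin n → Bool, (a α * a β) * (chi α x * chi β x)
        = (a α * a β) * (if α = β then (2:ℝ)^n else 0) := by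
      intro β _
      rw [← Finset.mul_sum, chi_ortho]
    rw [Finset.sum_congr rfl e3]
    simp only [mul_ite, mul_zero]
    rw [Finset.sum_ite_eq F α fun β => a α * a β * 2^n]
    rw [if_pos hα]; ring
  rw [Finset.sum_congr rfl e2, ← Finset.sum_mul]
  ring

lemma bessel {n : ℕ} (f : (Fin n → Bool) → ℝ) :
    (2:ℝ)^n * ∑ α : Finset (Fin n), (((2:ℝ)^n)⁻¹ * ∑ x : Fin n → Bool, chi α x * f x)^2
      ≤ ∑ x : Fin n → Bool, (f x)^2 := by
  set c : Finset (Fin n) → ℝ := fun α => ((2:ℝ)^n)⁻¹ * ∑ x : Fin n → Bool, chi α x * f x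
    with hc
  have h2n : (0:ℝ) < 2^n := by positivity
  have hsum : ∀ α : Finset (Fin n), ∑ x : Fin n → Bool, chi α x * f x = 2^n * c α := by
    intro α; rw [hc]; field_simp
  have key : (0:ℝ) ≤ ∑ x : Fin n → Bool, (f x - ∑ α : Finset (Fin n), c α * chi α x)^2 :=
    Finset.sum_nonneg fun x _ => sq_nonneg _
  have expand : ∑ x : Fin n → Bool, (f x - ∑ α : Finset (Fin n), c α * chi α x)^2
      = ∑ x : Fin n → Bool, (f x)^2 - (2:ℝ)^n * ∑ α : Finset (Fin n), (c α)^2 := by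
    have e1 : ∀ x : Fin n → Bool, (f x - ∑ α : Finset (Fin n), c α * chi α x)^2
        = (f x)^2 - 2 * (∑ α : Finset (Fin n), c α * (chi α x * f x))
          + (∑ α : Finset (Fin n), c α * chi α x)^2 := by
      intro x
      have : f x * ∑ α : Finset (Fin n), c α * chi α x
          = ∑ α : Finset (Fin n), c α * (chi α x * f x) := by
        rw [Finset.mul_sum]
        exact Finset.sum_congr rfl fun α _ => by ring
      rw [sub_sq, mul_assoc, this]
    simp_rw [e1]
    rw [Finset.sum_add_distrib, Finset.sum_sub_distrib, sum_sq_chi]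
    have e2 : ∑ x : Fin n → Bool, 2 * (∑ α : Finset (Fin n), c α * (chi α x * f x))
        = 2 * ((2:ℝ)^n * ∑ α : Finset (Fin n), (c α)^2) := by
      rw [← Finset.mul_sum, Finset.sum_comm]
      congr 1
      rw [Finset.mul_sum]
      refine Finset.sum_congr rfl fun α _ => ?_
      rw [← Finset.mul_sum, hsum]
      ring
    rw [e2]
    ring
  linarith [key, expand.symm ▸ key]

lemma coeff_apply {n p : ℕ} (B : (Fin n → Bool) → Matrix (Fin p) (Fin p) ℝ)
    (α : Finset (Fin n)) (i j : Fin p) :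
    matFourierCoeff B α i j = ((2:ℝ)^n)⁻¹ * ∑ x : Fin n → Bool, chi α x * B x i j := by
  simp [matFourierCoeff, Matrix.sum_apply]

lemma frobSq_nonneg {p : ℕ} (M : Matrix (Fin p) (Fin p) ℝ) : 0 ≤ frobSq M := by
  refine Finset.sum_nonneg fun i _ => Finset.sum_nonneg fun j _ => sq_nonneg _

lemma swap3 {A B C : Type*} [Fintype A] [Fintype B] [Fintype C] (f : A → B → C → ℝ) :
    ∑ a : A, ∑ b : B, ∑ c : C, f a b c = ∑ b : B, ∑ c : C, ∑ a : A, f a b c := by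
  rw [Finset.sum_comm]
  exact Finset.sum_congr rfl fun b _ => Finset.sum_comm

lemma matBessel {n p : ℕ} (B : (Fin n → Bool) → Matrix (Fin p) (Fin p) ℝ) :
    (2:ℝ)^n * ∑ α : Finset (Fin n), frobSq (matFourierCoeff B α)
      ≤ ∑ x : Fin n → Bool, frobSq (B x) := by
  have h : ∀ i j : Fin p,
      (2:ℝ)^n * ∑ α : Finset (Fin n), (matFourierCoeff B α i j)^2
        ≤ ∑ x : Fin n → Bool, (B x i j)^2 := by
    intro i j
    simp_rw [coeff_apply]
    exact bessel (fun x => B x i j)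
  calc (2:ℝ)^n * ∑ α : Finset (Fin n), frobSq (matFourierCoeff B α)
      = ∑ i, ∑ j, (2:ℝ)^n * ∑ α : Finset (Fin n), (matFourierCoeff B α i j)^2 := by
        simp_rw [frobSq, Finset.mul_sum]
        exact swap3 (fun α i j => (2:ℝ)^n * (matFourierCoeff B α i j)^2)
    _ ≤ ∑ i, ∑ j, ∑ x : Fin n → Bool, (B x i j)^2 := by
        refine Finset.sum_le_sum fun i _ => Finset.sum_le_sum fun j _ => h i j
    _ = ∑ x : Fin n → Bool, frobSq (B x) := by
        simp_rw [frobSq]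
        exact (swap3 (fun x i j => (B x i j)^2)).symm

lemma swap3' {A B C : Type*} [Fintype B] [Fintype C] (f : A → B → C → ℝ)
    (s : Finset A) :
    ∑ a ∈ s, ∑ b : B, ∑ c : C, f a b c = ∑ b : B, ∑ c : C, ∑ a ∈ s, f a b c := by
  rw [Finset.sum_comm]
  exact Finset.sum_congr rfl fun b _ => Finset.sum_comm

lemma highSum {n p : ℕ} (d : ℕ) (B : (Fin n → Bool) → Matrix (Fin p) (Fin p) ℝ)
    (S : Finset (Fin n)) :
    ∑ x : Fin n → Bool, frobSq (highPart d B S x)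
      = 2^n * ∑ α ∈ Finset.filter (fun α : Finset (Fin n) => d < 2 * (α ∩ S).card)
          Finset.univ, frobSq (matFourierCoeff B α) := by
  set F := Finset.filter (fun α : Finset (Fin n) => d < 2 * (α ∩ S).card) Finset.univ with hF
  have h1 : ∀ (x : Fin n → Bool) (i j : Fin p),
      highPart d B S x i j = ∑ α ∈ F, matFourierCoeff B α i j * chi α x := by
    intro x i j
    rw [highPart, Matrix.sum_apply]
    exact Finset.sum_congr rfl fun α _ => by simp [mul_comm]
  calc ∑ x : Fin n → Bool, frobSq (highPart d B S x)
      = ∑ i, ∑ j, ∑ x : Fin n → Bool, (∑ α ∈ F, matFourierCoeff B α i j * chi α x)^2 := by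
        simp_rw [frobSq, h1]
        exact swap3 (fun x i j => (∑ α ∈ F, matFourierCoeff B α i j * chi α x)^2)
    _ = ∑ i, ∑ j, (2:ℝ)^n * ∑ α ∈ F, (matFourierCoeff B α i j)^2 := by
        refine Finset.sum_congr rfl fun i _ => Finset.sum_congr rfl fun j _ =>
          sum_sq_chi F _
    _ = 2^n * ∑ α ∈ F, frobSq (matFourierCoeff B α) := by
        simp_rw [frobSq, Finset.mul_sum]
        exact (swap3' (fun α i j => (2:ℝ)^n * (matFourierCoeff B α i j)^2) F).symm

lemma superset_count {n : ℕ} (T : Finset (Fin n)) (k m : ℕ) (hT : T.card = k)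
    (hk : k ≤ m) :
    ((Finset.powersetCard m (Finset.univ : Finset (Fin n))).filter
        (fun S => T ⊆ S)).card = Nat.choose (n - k) (m - k) := by
  have hcard : ((Finset.univ : Finset (Fin n)) \ T).card = n - k := by
    rw [Finset.card_sdiff_of_subset (Finset.subset_univ T), Finset.card_univ, Fintype.card_fin, hT]
  rw [← hcard, ← Finset.card_powersetCard]
  apply Finset.card_bij (fun S _ => S \ T)
  · intro S hS
    simp only [Finset.mem_filter, Finset.mem_powersetCard] at hS
    obtain ⟨⟨-, hSm⟩, hTS⟩ := hS
    rw [Finset.mem_powersetCard]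
    constructor
    · exact Finset.sdiff_subset_sdiff (Finset.subset_univ S) le_rfl
    · rw [Finset.card_sdiff_of_subset hTS, hSm, hT]
  · intro S hS S' hS' h
    simp only [Finset.mem_filter, Finset.mem_powersetCard] at hS hS'
    have := congrArg (· ∪ T) h
    simpa [Finset.sdiff_union_of_subset hS.2, Finset.sdiff_union_of_subset hS'.2] using this
  · intro U hU
    rw [Finset.mem_powersetCard] at hU
    obtain ⟨hU1, hU2⟩ := hU
    have hdisj : Disjoint U T := by
      refine Finset.disjoint_left.mpr fun a ha hat => ?_
      exact (Finset.mem_sdiff.mp (hU1 ha)).2 hat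
    refine ⟨U ∪ T, ?_, ?_⟩
    · simp only [Finset.mem_filter, Finset.mem_powersetCard]
      refine ⟨⟨Finset.subset_univ _, ?_⟩, Finset.subset_union_right⟩
      rw [Finset.card_union_of_disjoint hdisj, hU2, hT]
      omega
    · rw [Finset.union_sdiff_right, Finset.sdiff_eq_self_of_disjoint hdisj]

lemma choose_desc_id : ∀ (k m n : ℕ), k ≤ m → m ≤ n →
    Nat.choose (n - k) (m - k) * Nat.descFactorial n k
      = Nat.choose n m * Nat.descFactorial m k := by
  intro k
  induction k with
  | zero => intro m n _ _; simp
  | succ k ih =>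
    intro m n hk hmn
    have hk' : k ≤ m := le_of_lt hk
    have h1 : Nat.descFactorial n (k + 1) = (n - k) * Nat.descFactorial n k :=
      Nat.descFactorial_succ n k
    have h2 : Nat.descFactorial m (k + 1) = (m - k) * Nat.descFactorial m k :=
      Nat.descFactorial_succ m k
    have hkm : k + 1 ≤ n := le_trans hk hmn
    have key : (n - k) * Nat.choose (n - (k+1)) (m - (k+1))
        = (m - k) * Nat.choose (n - k) (m - k) := by
      have := Nat.add_one_mul_choose_eq (n - (k+1)) (m - (k+1))
      have e1 : Nat.succ (n - (k+1)) = n - k := by omega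
      have e2 : Nat.succ (m - (k+1)) = m - k := by omega
      have e3 : (n - (k+1)) + 1 = n - k := by omega
      have e4 : (m - (k+1)) + 1 = m - k := by omega
      rw [e3, e4] at this
      rw [this]
      ring
    calc Nat.choose (n - (k+1)) (m - (k+1)) * Nat.descFactorial n (k+1)
        = ((n - k) * Nat.choose (n - (k+1)) (m - (k+1))) * Nat.descFactorial n k := by
          rw [h1]; ring
      _ = ((m - k) * Nat.choose (n - k) (m - k)) * Nat.descFactorial n k := by rw [key]
      _ = (m - k) * (Nat.choose (n - k) (m - k) * Nat.descFactorial n k) := by ring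
      _ = (m - k) * (Nat.choose n m * Nat.descFactorial m k) := by rw [ih m n hk' hmn]
      _ = Nat.choose n m * Nat.descFactorial m (k+1) := by rw [h2]; ring

lemma cnt_le {n : ℕ} (d m : ℕ) (α : Finset (Fin n)) (hk : d / 2 + 1 ≤ m) :
    ((Finset.powersetCard m (Finset.univ : Finset (Fin n))).filter
        (fun S => d < 2 * (α ∩ S).card)).card
      ≤ Nat.choose α.card (d/2 + 1) * Nat.choose (n - (d/2 + 1)) (m - (d/2 + 1)) := by
  set k := d / 2 + 1 with hkdef
  have hsub : (Finset.powersetCard m (Finset.univ : Finset (Fin n))).filter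
        (fun S => d < 2 * (α ∩ S).card)
      ⊆ (Finset.powersetCard k α).biUnion
          (fun T => (Finset.powersetCard m (Finset.univ : Finset (Fin n))).filter
            (fun S => T ⊆ S)) := by
    intro S hS
    simp only [Finset.mem_filter, Finset.mem_powersetCard] at hS
    obtain ⟨⟨hSu, hSm⟩, hd⟩ := hS
    have hc : k ≤ (α ∩ S).card := by omega
    obtain ⟨T, hT1, hT2⟩ := Finset.exists_subset_card_eq hc
    refine Finset.mem_biUnion.mpr ⟨T, ?_, ?_⟩
    · rw [Finset.mem_powersetCard]
      exact ⟨hT1.trans Finset.inter_subset_left, hT2⟩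
    · simp only [Finset.mem_filter, Finset.mem_powersetCard]
      exact ⟨⟨hSu, hSm⟩, hT1.trans Finset.inter_subset_right⟩
  calc ((Finset.powersetCard m (Finset.univ : Finset (Fin n))).filter
        (fun S => d < 2 * (α ∩ S).card)).card
      ≤ ((Finset.powersetCard k α).biUnion
          (fun T => (Finset.powersetCard m (Finset.univ : Finset (Fin n))).filter
            (fun S => T ⊆ S))).card := Finset.card_le_card hsub
    _ ≤ ∑ T ∈ Finset.powersetCard k α,
          ((Finset.powersetCard m (Finset.univ : Finset (Fin n))).filter
            (fun S => T ⊆ S)).card := Finset.card_biUnion_le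
    _ = ∑ T ∈ Finset.powersetCard k α, Nat.choose (n - k) (m - k) := by
        refine Finset.sum_congr rfl fun T hT => ?_
        rw [Finset.mem_powersetCard] at hT
        exact superset_count T k m hT.2 hk
    _ = Nat.choose α.card k * Nat.choose (n - k) (m - k) := by
        rw [Finset.sum_const, Finset.card_powersetCard, smul_eq_mul]

lemma cnt_real {n d ℓ m : ℕ} (hℓ : 0 < ℓ) (hm : 0 < m) (hmn : m < n)
    (α : Finset (Fin n)) (hα : α.card ≤ ℓ) :
    ((((Finset.powersetCard m (Finset.univ : Finset (Fin n))).filter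
        (fun S => d < 2 * (α ∩ S).card)).card : ℕ) : ℝ)
      ≤ (Nat.choose n m : ℝ) * (((ℓ:ℝ) * m) / ((n:ℝ) - m)) ^ ((d:ℝ)/2) := by
  set k := d / 2 + 1 with hkdef
  set base := ((ℓ:ℝ) * m) / ((n:ℝ) - m) with hbdef
  set cnt := ((Finset.powersetCard m (Finset.univ : Finset (Fin n))).filter
        (fun S => d < 2 * (α ∩ S).card)).card with hcnt
  have hnm : (0:ℝ) < (n:ℝ) - m := by
    have : (m:ℝ) < n := by exact_mod_cast hmn
    linarith
  have hbase : 0 < base := by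
    apply div_pos _ hnm
    have h1 : (0:ℝ) < ℓ := by exact_mod_cast hℓ
    have h2 : (0:ℝ) < m := by exact_mod_cast hm
    positivity
  by_cases h1 : 1 ≤ base
  · have hcle : cnt ≤ Nat.choose n m := by
      calc cnt ≤ (Finset.powersetCard m (Finset.univ : Finset (Fin n))).card :=
            Finset.card_filter_le _ _
        _ = Nat.choose n m := by
            rw [Finset.card_powersetCard, Finset.card_univ, Fintype.card_fin]
    have hr : (1:ℝ) ≤ base ^ ((d:ℝ)/2) := Real.one_le_rpow (x := base) (z := ((d:ℝ)/2)) h1 (div_nonneg (Nat.cast_nonneg d) (by norm_num))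
    have hcle' : (cnt : ℝ) ≤ (Nat.choose n m : ℝ) := by exact_mod_cast hcle
    nlinarith [(Nat.cast_nonneg (Nat.choose n m) : (0:ℝ) ≤ (Nat.choose n m : ℝ))]
  · push_neg at h1
    by_cases h2 : k ≤ m
    · have hnat : cnt * (n - m)^k ≤ Nat.choose n m * (ℓ^k * m^k) := by
        calc cnt * (n - m)^k
            ≤ (Nat.choose α.card k * Nat.choose (n - k) (m - k)) * (n - m)^k :=
              Nat.mul_le_mul_right _ (cnt_le d m α h2)
          _ ≤ (Nat.choose ℓ k * Nat.choose (n - k) (m - k)) * (n - m)^k :=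
              Nat.mul_le_mul_right _ (Nat.mul_le_mul_right _ (Nat.choose_le_choose k hα))
          _ ≤ Nat.choose ℓ k * (Nat.choose (n - k) (m - k) * Nat.descFactorial n k) := by
              rw [mul_assoc]
              refine Nat.mul_le_mul_left _ (Nat.mul_le_mul_left _ ?_)
              calc (n - m)^k ≤ (n + 1 - k)^k := Nat.pow_le_pow_left (by omega) k
                _ ≤ Nat.descFactorial n k := Nat.pow_sub_le_descFactorial n k
          _ = Nat.choose ℓ k * (Nat.choose n m * Nat.descFactorial m k) := by
              rw [choose_desc_id k m n h2 (le_of_lt hmn)]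
          _ ≤ Nat.choose ℓ k * (Nat.choose n m * m^k) :=
              Nat.mul_le_mul_left _ (Nat.mul_le_mul_left _ (Nat.descFactorial_le_pow m k))
          _ ≤ ℓ^k * (Nat.choose n m * m^k) :=
              Nat.mul_le_mul_right _
                ((Nat.choose_le_descFactorial ℓ k).trans (Nat.descFactorial_le_pow ℓ k))
          _ = Nat.choose n m * (ℓ^k * m^k) := by ring
      have hreal : (cnt : ℝ) * ((n:ℝ) - m)^k ≤ (Nat.choose n m : ℝ) * ((ℓ:ℝ)^k * (m:ℝ)^k) := by
        have := hnat
        have hcast : (((n - m : ℕ)) : ℝ) = (n:ℝ) - m := by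
          rw [Nat.cast_sub (le_of_lt hmn)]
        calc (cnt : ℝ) * ((n:ℝ) - m)^k = ((cnt * (n - m)^k : ℕ) : ℝ) := by
              push_cast [hcast]; ring
          _ ≤ ((Nat.choose n m * (ℓ^k * m^k) : ℕ) : ℝ) := by exact_mod_cast this
          _ = (Nat.choose n m : ℝ) * ((ℓ:ℝ)^k * (m:ℝ)^k) := by push_cast; ring
      have hpow : (cnt : ℝ) ≤ (Nat.choose n m : ℝ) * base ^ k := by
        rw [hbdef, div_pow, ← mul_div_assoc, le_div_iff₀ (by positivity)]
        calc (cnt : ℝ) * ((n:ℝ) - m)^k ≤ (Nat.choose n m : ℝ) * ((ℓ:ℝ)^k * (m:ℝ)^k) := hreal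
          _ = (Nat.choose n m : ℝ) * ((ℓ:ℝ) * m)^k := by rw [mul_pow]
      have hrpow : base ^ k ≤ base ^ ((d:ℝ)/2) := by
        have hk2 : (d:ℝ)/2 ≤ (k:ℝ) := by
          have : d ≤ 2 * k := by omega
          have : (d:ℝ) ≤ 2 * k := by exact_mod_cast this
          linarith
        calc base ^ k = base ^ ((k:ℕ):ℝ) := (Real.rpow_natCast base k).symm
          _ ≤ base ^ ((d:ℝ)/2) :=
            Real.rpow_le_rpow_of_exponent_ge hbase (le_of_lt h1) hk2
      calc (cnt : ℝ) ≤ (Nat.choose n m : ℝ) * base ^ k := hpow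
        _ ≤ (Nat.choose n m : ℝ) * base ^ ((d:ℝ)/2) := by
            exact mul_le_mul_of_nonneg_left hrpow (Nat.cast_nonneg _)
    · have hzero : cnt = 0 := by
        rw [hcnt, Finset.card_eq_zero]
        apply Finset.filter_false_of_mem
        intro S hS
        rw [Finset.mem_powersetCard] at hS
        have hle : (α ∩ S).card ≤ m := le_trans (Finset.card_le_card
          Finset.inter_subset_right) (le_of_eq hS.2)
        omega
      rw [hzero]
      push_cast
      positivity

/-- Let `B : {±1}^n → ℝ^{p×p}` have degree at most `ℓ` (all Fourier
coefficients `B̂(α)` with `|α| > ℓ` vanish).  For a uniformly random `m`-subset `S` of `[n]`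
and uniform `x`, the high part `B_{S,high}(x) = ∑_{|α∩S| > d/2} B̂(α)χ_α(x)` satisfies
`E_{S,x} ‖B_{S,high}(x)‖_F² ≤ (ℓm/(n−m))^{d/2} · E_x ‖B(x)‖_F²`. -/
theorem stmt14 (n d ℓ m p : ℕ) (hd : 0 < d) (hℓ : 0 < ℓ) (hm : 0 < m)
    (hdn : d ≤ n) (hℓn : ℓ ≤ n) (hmn : m < n)
    (B : (Fin n → Bool) → Matrix (Fin p) (Fin p) ℝ)
    (hBdeg : ∀ α : Finset (Fin n), ℓ < α.card → matFourierCoeff B α = 0) :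
    avgSx m n (fun S x => frobSq (highPart d B S x)) ≤
      (((ℓ : ℝ) * m) / ((n : ℝ) - m)) ^ ((d : ℝ) / 2) *
        ((∑ x : Fin n → Bool, frobSq (B x)) / 2 ^ n) := by
  classical
  set P := Finset.powersetCard m (Finset.univ : Finset (Fin n)) with hP
  set g : Finset (Fin n) → ℝ := fun α => frobSq (matFourierCoeff B α) with hg
  set base := ((ℓ:ℝ) * m) / ((n:ℝ) - m) with hbase
  set T : ℝ := ∑ x : Fin n → Bool, frobSq (B x) with hT
  have h2n : (0:ℝ) < 2^n := by positivity
  have hC : (0:ℝ) < (Nat.choose n m : ℝ) := by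
    exact_mod_cast Nat.choose_pos (le_of_lt hmn)
  have hg0 : ∀ α : Finset (Fin n), 0 ≤ g α := fun α => frobSq_nonneg _
  have hnm : (0:ℝ) < (n:ℝ) - m := by
    have : (m:ℝ) < n := by exact_mod_cast hmn
    linarith
  have hbpos : (0:ℝ) ≤ base := by
    rw [hbase]
    positivity
  have hb0 : (0:ℝ) ≤ base ^ ((d:ℝ)/2) := Real.rpow_nonneg hbpos _
  have hnum : ∑ S ∈ P, ∑ x : Fin n → Bool, frobSq (highPart d B S x)
      = 2^n * ∑ α : Finset (Fin n),
          ((P.filter (fun S => d < 2 * (α ∩ S).card)).card : ℝ) * g α := by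
    calc ∑ S ∈ P, ∑ x : Fin n → Bool, frobSq (highPart d B S x)
        = ∑ S ∈ P, 2^n * ∑ α ∈ Finset.filter
            (fun α : Finset (Fin n) => d < 2 * (α ∩ S).card) Finset.univ, g α :=
          Finset.sum_congr rfl fun S _ => highSum d B S
      _ = 2^n * ∑ S ∈ P, ∑ α : Finset (Fin n),
            (if d < 2 * (α ∩ S).card then g α else 0) := by
          rw [← Finset.mul_sum]
          congr 1
          exact Finset.sum_congr rfl fun S _ => Finset.sum_filter _ _
      _ = 2^n * ∑ α : Finset (Fin n), ∑ S ∈ P,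
            (if d < 2 * (α ∩ S).card then g α else 0) := by
          rw [Finset.sum_comm]
      _ = 2^n * ∑ α : Finset (Fin n),
            ((P.filter (fun S => d < 2 * (α ∩ S).card)).card : ℝ) * g α := by
          congr 1
          refine Finset.sum_congr rfl fun α _ => ?_
          rw [← Finset.sum_filter, Finset.sum_const, nsmul_eq_mul]
  have hαbound : ∀ α : Finset (Fin n),
      ((P.filter (fun S => d < 2 * (α ∩ S).card)).card : ℝ) * g α
        ≤ ((Nat.choose n m : ℝ) * base ^ ((d:ℝ)/2)) * g α := by
    intro α
    by_cases hα : α.card ≤ ℓ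
    · exact mul_le_mul_of_nonneg_right (cnt_real hℓ hm hmn α hα) (hg0 α)
    · have hz : g α = 0 := by
        rw [hg]
        simp only [hBdeg α (by omega)]
        simp [frobSq]
      rw [hz, mul_zero, mul_zero]
  have hbes : ∑ α : Finset (Fin n), g α ≤ T / 2^n := by
    rw [le_div_iff₀ h2n]
    have := matBessel B
    linarith
  have hsum_le : ∑ α : Finset (Fin n),
        ((P.filter (fun S => d < 2 * (α ∩ S).card)).card : ℝ) * g α
      ≤ ((Nat.choose n m : ℝ) * base ^ ((d:ℝ)/2)) * (T / 2^n) := by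
    calc ∑ α : Finset (Fin n),
          ((P.filter (fun S => d < 2 * (α ∩ S).card)).card : ℝ) * g α
        ≤ ∑ α : Finset (Fin n), ((Nat.choose n m : ℝ) * base ^ ((d:ℝ)/2)) * g α :=
          Finset.sum_le_sum fun α _ => hαbound α
      _ = ((Nat.choose n m : ℝ) * base ^ ((d:ℝ)/2)) * ∑ α : Finset (Fin n), g α := by
          rw [Finset.mul_sum]
      _ ≤ ((Nat.choose n m : ℝ) * base ^ ((d:ℝ)/2)) * (T / 2^n) := by
          exact mul_le_mul_of_nonneg_left hbes (by positivity)
  rw [avgSx, ← hP, hnum, div_le_iff₀ (by positivity)]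
  have hfin : 2^n * (∑ α : Finset (Fin n),
        ((P.filter (fun S => d < 2 * (α ∩ S).card)).card : ℝ) * g α)
      ≤ 2^n * (((Nat.choose n m : ℝ) * base ^ ((d:ℝ)/2)) * (T / 2^n)) :=
    mul_le_mul_of_nonneg_left hsum_le (le_of_lt h2n)
  refine hfin.trans_eq ?_
  ring
end
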